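/- Let κ be a regular uncountable cardinal. Suppose F ⊆ [κ]^κ is an unreaped family with |F| = r(κ), and suppose there is a club E₁ ⊆ κ such that for every club E ⊆ E₁ there exists A ∈ F with A ⊆* set(E, E₁). Then d(κ) ≤ r(κ). -/

import Mathlib

open Cardinal Set

/-- `A` is a subset of `κ` (identified with `Iio κ.ord`) of full cardinality `κ`,
i.e. `A ∈ [κ]^κ`. -/
def IsBig (κ : Cardinal.{0}) (A : Set Ordinal) : Prop :=
  A ⊆ Set.Iio κ.ord ∧ #A = Cardinal.lift.{1} κ

/-- `f` represents a function in `κ^κ`. -/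
def FunOn (κ : Cardinal.{0}) (f : Ordinal → Ordinal) : Prop :=
  ∀ o < κ.ord, f o < κ.ord

/-- `f ≤* g` : the set of `α < κ` with `g α < f α` has cardinality `< κ`. -/
def LeStar (κ : Cardinal.{0}) (f g : Ordinal → Ordinal) : Prop :=
  #({α : Ordinal | α < κ.ord ∧ g α < f α} : Set Ordinal) < Cardinal.lift.{1} κ

/-- `F ⊆ κ^κ` is `*`-unbounded. -/
def UnboundedFam (κ : Cardinal.{0}) (F : Set (Ordinal → Ordinal)) : Prop :=
  (∀ f ∈ F, FunOn κ f) ∧ ¬ ∃ g, FunOn κ g ∧ ∀ f ∈ F, LeStar κ f g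

/-- `F ⊆ κ^κ` is `*`-dominating. -/
def DominatingFam (κ : Cardinal.{0}) (F : Set (Ordinal → Ordinal)) : Prop :=
  (∀ f ∈ F, FunOn κ f) ∧ ∀ g, FunOn κ g → ∃ f ∈ F, LeStar κ g f

/-- The bounding number `𝔟(κ)`. -/
noncomputable def boundingNum (κ : Cardinal.{0}) : Cardinal.{1} :=
  sInf { c | ∃ F : Set (Ordinal → Ordinal), UnboundedFam κ F ∧ #F = c }

/-- The dominating number `𝔡(κ)`. -/
noncomputable def dominatingNum (κ : Cardinal.{0}) : Cardinal.{1} :=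
  sInf { c | ∃ F : Set (Ordinal → Ordinal), DominatingFam κ F ∧ #F = c }

/-- `B` reaps the family `F ⊆ [κ]^κ`. -/
def Reaps (κ : Cardinal.{0}) (B : Set Ordinal) (F : Set (Set Ordinal)) : Prop :=
  B ⊆ Set.Iio κ.ord ∧ ∀ A ∈ F,
    #(A ∩ B : Set Ordinal) = Cardinal.lift.{1} κ ∧
    #(A ∩ (Set.Iio κ.ord \ B) : Set Ordinal) = Cardinal.lift.{1} κ

/-- `F ⊆ [κ]^κ` is an unreaped family. -/
def UnreapedFam (κ : Cardinal.{0}) (F : Set (Set Ordinal)) : Prop :=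
  (∀ A ∈ F, IsBig κ A) ∧ ¬ ∃ B, Reaps κ B F

/-- The reaping number `𝔯(κ)`. -/
noncomputable def reapingNum (κ : Cardinal.{0}) : Cardinal.{1} :=
  sInf { c | ∃ F : Set (Set Ordinal), UnreapedFam κ F ∧ #F = c }

/-- `A` and `B` are almost disjoint: `|A ∩ B| < κ`. -/
def AlmostDisjoint (κ : Cardinal.{0}) (A B : Set Ordinal) : Prop :=
  #(A ∩ B : Set Ordinal) < Cardinal.lift.{1} κ

/-- `𝒜 ⊆ [κ]^κ` is an almost disjoint family. -/
def ADFamily (κ : Cardinal.{0}) (𝒜 : Set (Set Ordinal)) : Prop :=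
  (∀ A ∈ 𝒜, IsBig κ A) ∧ ∀ A ∈ 𝒜, ∀ B ∈ 𝒜, A ≠ B → AlmostDisjoint κ A B

/-- `𝒜 ⊆ [κ]^κ` is a maximal almost disjoint family. -/
def MADFamily (κ : Cardinal.{0}) (𝒜 : Set (Set Ordinal)) : Prop :=
  ADFamily κ 𝒜 ∧ Cardinal.lift.{1} κ ≤ #𝒜 ∧
    ∀ B, IsBig κ B → ∃ A ∈ 𝒜, ¬ AlmostDisjoint κ A B

/-- The almost disjointness number `𝔞(κ)`. -/
noncomputable def adNum (κ : Cardinal.{0}) : Cardinal.{1} :=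
  sInf { c | ∃ 𝒜 : Set (Set Ordinal), MADFamily κ 𝒜 ∧ #𝒜 = c }

/-- `E` is a club (closed unbounded set) in the ordinal `o`. -/
def IsClubIn (E : Set Ordinal) (o : Ordinal) : Prop :=
  E ⊆ Set.Iio o ∧ (∀ x < o, ∃ e ∈ E, x ≤ e) ∧
    ∀ x < o, x ≠ 0 → sSup (E ∩ Set.Iio x) = x → x ∈ E

/-- `S` is stationary in the ordinal `o`. -/
def IsStationaryIn (S : Set Ordinal) (o : Ordinal) : Prop :=
  S ⊆ Set.Iio o ∧ ∀ E, IsClubIn E o → (S ∩ E).Nonempty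

/-- `s_A(α) = min (A \ (α+1))`, the least element of `A` above `α`. -/
noncomputable def succIn (A : Set Ordinal) (α : Ordinal) : Ordinal :=
  sInf {β | β ∈ A ∧ α < β}

/-- `set(E₁, ξ) = [ξ, s_{E₁}(ξ))`. -/
def blockSet (E₁ : Set Ordinal) (ξ : Ordinal) : Set Ordinal :=
  {ζ | ξ ≤ ζ ∧ ζ < succIn E₁ ξ}

/-- `set(E₂, E₁) = ⋃_{ξ ∈ E₂} set(E₁, ξ)`. -/
def setSet (E₂ E₁ : Set Ordinal) : Set Ordinal :=
  ⋃ ξ ∈ E₂, blockSet E₁ ξ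

/-- `A ⊆* B` mod `κ` : `|A \ B| < κ`. -/
def SubsetStar (κ : Cardinal.{0}) (A B : Set Ordinal) : Prop :=
  #(A \ B : Set Ordinal) < Cardinal.lift.{1} κ

/-- The weak power `λ^[κ]`. -/
noncomputable def weakPower (l k : Cardinal.{0}) : Cardinal.{1} :=
  sInf { c | ∃ P : Set (Set Ordinal),
    (∀ v ∈ P, v ⊆ Set.Iio l.ord ∧ #v ≤ Cardinal.lift.{1} k) ∧ #P = c ∧
    ∀ u : Set Ordinal, u ⊆ Set.Iio l.ord → #u = Cardinal.lift.{1} k →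
      ∃ P₀ ⊆ P, #P₀ < Cardinal.lift.{1} k ∧ u = ⋃₀ P₀ }

/-- Shelah's revised GCH, a theorem of ZFC. -/
def RevisedGCH : Prop :=
  ∀ θ lam : Cardinal.{0}, ℵ₀ < θ → θ.IsStrongLimit → θ ≤ lam →
    ∃ σ < θ, ∀ k, σ ≤ k → k < θ → weakPower lam k = Cardinal.lift.{1} lam

def Unbdd (o : Ordinal) (A : Set Ordinal) : Prop := ∀ x < o, ∃ a ∈ A, x < a

theorem small_bdd (κ : Cardinal.{0}) (hreg : κ.IsRegular) (S : Set Ordinal)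
    (hS : S ⊆ Set.Iio κ.ord) (hc : #S < Cardinal.lift.{1} κ) :
    ∃ β < κ.ord, ∀ s ∈ S, s < β := by
  by_contra hcon
  push_neg at hcon
  have hT : Set.Unbounded (· < ·) (Subtype.val ⁻¹' S : Set (Set.Iio κ.ord)) := by
    intro a
    obtain ⟨s, hsS, hs⟩ := hcon a.1 a.2
    exact ⟨⟨s, hS hsS⟩, hsS, not_lt.2 (by exact_mod_cast hs)⟩
  have h1 := Order.cof_le (s := (Subtype.val ⁻¹' S : Set (Set.Iio κ.ord)))
    (fun a => let ⟨b, hb, hba⟩ := hT a; ⟨b, hb, not_lt.1 hba⟩)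
  rw [Ordinal.cof_Iio, ← Ordinal.lift_cof, hreg.cof_eq] at h1
  have h2 : #(Subtype.val ⁻¹' S : Set (Set.Iio κ.ord)) = #S :=
    Cardinal.mk_preimage_of_injective_of_subset_range _ _ Subtype.val_injective
      (by rintro x hx; exact ⟨⟨x, hS hx⟩, rfl⟩)
  rw [h2] at h1
  exact absurd hc (not_lt.2 h1)

theorem big_unbdd (κ : Cardinal.{0}) (hreg : κ.IsRegular) (A : Set Ordinal)
    (hA : A ⊆ Set.Iio κ.ord) (hc : #A = Cardinal.lift.{1} κ) : Unbdd κ.ord A := by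
  intro x hx
  by_contra hcon
  push_neg at hcon
  have hsub : A ⊆ Set.Iio (x + 1) := fun a ha =>
    lt_of_le_of_lt (hcon a ha) (lt_add_one x)
  have h1 : #A ≤ #(Set.Iio (x + 1) : Set Ordinal) := Cardinal.mk_le_mk_of_subset hsub
  rw [Ordinal.mk_Iio_ordinal, hc] at h1
  have hx1 : x + 1 < κ.ord := (Cardinal.isSuccLimit_ord hreg.aleph0_le).add_one_lt hx
  have : (x + 1).card < κ := Cardinal.lt_ord.1 hx1
  exact absurd (Cardinal.lift_le.1 h1) (not_le.2 this)

theorem succIn_spec {o : Ordinal} {A : Set Ordinal} (hA : Unbdd o A) {α : Ordinal}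
    (hα : α < o) : succIn A α ∈ A ∧ α < succIn A α := by
  obtain ⟨a, haA, ha⟩ := hA α hα
  exact csInf_mem (⟨a, haA, ha⟩ : {β | β ∈ A ∧ α < β}.Nonempty)

theorem succIn_lt {o : Ordinal} {A : Set Ordinal} (hA : Unbdd o A) (hsub : A ⊆ Set.Iio o)
    {α : Ordinal} (hα : α < o) : succIn A α < o := hsub (succIn_spec hA hα).1

theorem succIn_mono {o : Ordinal} {A : Set Ordinal} (hA : Unbdd o A) {α α' : Ordinal}
    (h : α ≤ α') (hα' : α' < o) : succIn A α ≤ succIn A α' := by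
  obtain ⟨a, haA, ha⟩ := hA α' hα'
  exact csInf_le_csInf (OrderBot.bddBelow _) ⟨a, haA, ha⟩
    (fun β hβ => ⟨hβ.1, lt_of_le_of_lt h hβ.2⟩)

theorem club_unbdd {o : Ordinal} {E : Set Ordinal} (hE : IsClubIn E o) (ho : Order.IsSuccLimit o) :
    Unbdd o E := by
  intro x hx
  obtain ⟨e, heE, he⟩ := hE.2.1 (x + 1) (ho.add_one_lt hx)
  exact ⟨e, heE, lt_of_lt_of_le (lt_add_one x) he⟩

/-- closure points of `g` inside `E₁` -/
def closurePts (κ : Cardinal.{0}) (E₁ : Set Ordinal) (g : Ordinal → Ordinal) : Set Ordinal :=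
  {ξ | ξ < κ.ord ∧ ξ ∈ E₁ ∧ ∀ δ < ξ, g δ < ξ}

theorem closurePts_unbdd (κ : Cardinal.{0}) (hreg : κ.IsRegular) (hunc : ℵ₀ < κ)
    (E₁ : Set Ordinal) (hE₁ : IsClubIn E₁ κ.ord) (g : Ordinal → Ordinal) (hg : FunOn κ g) :
    ∀ x < κ.ord, ∃ ξ ∈ closurePts κ E₁ g, x < ξ := by
  intro x hx
  have holim : Order.IsSuccLimit κ.ord := Cardinal.isSuccLimit_ord hreg.aleph0_le
  have hE₁u : Unbdd κ.ord E₁ := club_unbdd hE₁ holim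
  set H : Ordinal → Ordinal := fun y =>
    max (sSup ((fun δ => g δ + 1) '' Set.Iio (y + 1))) (succIn E₁ y + 1) with hH
  have himg : ∀ y < κ.ord, ((fun δ => g δ + 1) '' Set.Iio (y + 1)) ⊆ Set.Iio κ.ord := by
    rintro y hy _ ⟨δ, hδ, rfl⟩
    exact holim.add_one_lt (hg δ (lt_of_lt_of_le hδ (holim.add_one_lt hy).le))
  have hbdd : ∀ y, BddAbove ((fun δ => g δ + 1) '' Set.Iio (y + 1)) := by
    intro y
    exact Ordinal.bddAbove_of_small
  have hne : ∀ y : Ordinal, ((fun δ => g δ + 1) '' Set.Iio (y + 1)).Nonempty :=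
    fun y => ⟨g y + 1, mem_image_of_mem _ (lt_add_one y)⟩
  have hHlt : ∀ y < κ.ord, H y < κ.ord := by
    intro y hy
    obtain ⟨β, hβ, hβ'⟩ := small_bdd κ hreg _ (himg y hy) (by
      calc #((fun δ => g δ + 1) '' Set.Iio (y + 1)) ≤ #(Set.Iio (y + 1) : Set Ordinal) :=
            Cardinal.mk_image_le
        _ = Cardinal.lift.{1} (y + 1).card := Ordinal.mk_Iio_ordinal _
        _ < Cardinal.lift.{1} κ := Cardinal.lift_lt.2 (Cardinal.lt_ord.1 (holim.add_one_lt hy)))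
    refine max_lt (lt_of_le_of_lt (csSup_le (hne y) (fun b hb => (hβ' b hb).le)) hβ) ?_
    exact holim.add_one_lt (succIn_lt hE₁u hE₁.1 hy)
  have hHgt : ∀ y < κ.ord, y < H y := fun y hy =>
    lt_of_lt_of_le (lt_of_lt_of_le (succIn_spec hE₁u hy).2 (lt_add_one _).le) (le_max_right _ _)
  have hgH : ∀ δ < κ.ord, g δ < H δ := by
    intro δ hδ
    have : g δ + 1 ≤ sSup ((fun δ' => g δ' + 1) '' Set.Iio (δ + 1)) :=
      le_csSup (hbdd δ) (mem_image_of_mem _ (lt_add_one δ))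
    exact lt_of_lt_of_le (lt_of_lt_of_le (lt_add_one _) this) (le_max_left _ _)
  have hsH : ∀ δ < κ.ord, succIn E₁ δ < H δ := fun δ _ =>
    lt_of_lt_of_le (lt_add_one _) (le_max_right _ _)
  have hHmono : ∀ δ y, δ ≤ y → y < κ.ord → H δ ≤ H y := by
    intro δ y hδy hy
    refine max_le_max ?_ (add_le_add_left (succIn_mono hE₁u hδy hy) 1)
    exact csSup_le_csSup (hbdd y) (hne δ) (image_mono (Iio_subset_Iio (by simpa using hδy)))
  set ξ := Ordinal.nfp H (x + 1) with hξ
  have hξlt : ξ < κ.ord :=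
    Ordinal.nfp_lt_ord (by rwa [hreg.cof_eq]) hHlt (holim.add_one_lt hx)
  have hxξ : x < ξ := lt_of_lt_of_le (lt_add_one x) (Ordinal.le_nfp H _)
  have hiter : ∀ n, H^[n] (x + 1) < κ.ord := fun n =>
    lt_of_le_of_lt (Ordinal.iterate_le_nfp H _ n) hξlt
  have hkey : ∀ δ < ξ, H δ < ξ := by
    intro δ hδ
    obtain ⟨n, hn⟩ := Ordinal.lt_nfp_iff.1 hδ
    have h1 : H δ ≤ H^[n + 1] (x + 1) := by
      rw [Function.iterate_succ_apply']
      exact hHmono δ _ hn.le (hiter n)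
    have h2 : H^[n + 1] (x + 1) < H^[n + 2] (x + 1) := by
      rw [Function.iterate_succ_apply' H (n+1)]
      exact hHgt _ (hiter (n + 1))
    exact lt_of_lt_of_le (lt_of_le_of_lt h1 h2) (Ordinal.iterate_le_nfp H _ (n+2))
  refine ⟨ξ, ⟨hξlt, ?_, fun δ hδ => (hgH δ (hδ.trans hξlt)).trans (hkey δ hδ)⟩, hxξ⟩
  refine hE₁.2.2 ξ hξlt (fun h0 => by exact absurd (h0 ▸ hxξ) (not_lt_of_ge (zero_le (a := x)))) ?_
  refine le_antisymm (csSup_le ⟨succIn E₁ x, (succIn_spec hE₁u hx).1,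
    lt_trans (hsH x hx) (hkey x hxξ)⟩ (fun b hb => hb.2.le)) (le_of_forall_lt (fun c hc => ?_))
  have hc' : c < κ.ord := hc.trans hξlt
  have hmem : succIn E₁ c ∈ E₁ ∩ Set.Iio ξ :=
    ⟨(succIn_spec hE₁u hc').1, (hsH c hc').trans (hkey c hc)⟩
  exact lt_of_lt_of_le (succIn_spec hE₁u hc').2
    (le_csSup ⟨ξ, fun b hb => hb.2.le⟩ hmem)

theorem closurePts_club (κ : Cardinal.{0}) (hreg : κ.IsRegular) (hunc : ℵ₀ < κ)
    (E₁ : Set Ordinal) (hE₁ : IsClubIn E₁ κ.ord) (g : Ordinal → Ordinal) (hg : FunOn κ g) :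
    IsClubIn (closurePts κ E₁ g) κ.ord := by
  refine ⟨fun ξ hξ => hξ.1, fun x hx => ?_, fun x hx hx0 hsup => ?_⟩
  · obtain ⟨ξ, hξ, hxξ⟩ := closurePts_unbdd κ hreg hunc E₁ hE₁ g hg x hx
    exact ⟨ξ, hξ, hxξ.le⟩
  have hne : (closurePts κ E₁ g ∩ Set.Iio x).Nonempty := by
    by_contra hcon
    rw [not_nonempty_iff_eq_empty] at hcon
    rw [hcon, csSup_empty] at hsup
    exact hx0 hsup.symm
  have hsub : closurePts κ E₁ g ∩ Set.Iio x ⊆ E₁ ∩ Set.Iio x :=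
    fun p hp => ⟨hp.1.2.1, hp.2⟩
  have hbig : ∀ δ < x, ∃ ξ ∈ closurePts κ E₁ g ∩ Set.Iio x, δ < ξ := by
    intro δ hδ
    by_contra hno
    push_neg at hno
    have := csSup_le hne hno
    rw [hsup] at this
    exact absurd hδ (not_lt.2 this)
  refine ⟨hx, hE₁.2.2 x hx hx0 (le_antisymm (csSup_le (hne.mono hsub) (fun b hb => hb.2.le))
    ?_), fun δ hδ => ?_⟩
  · conv_lhs => rw [← hsup]
    exact csSup_le_csSup ⟨x, fun b hb => hb.2.le⟩ hne hsub
  · obtain ⟨ξ, hξ, hδξ⟩ := hbig δ hδ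
    exact lt_trans (hξ.1.2.2 δ hδξ) hξ.2

/-- If `F ⊆ [κ]^κ` is unreaped of size `𝔯(κ)` and there is a club `E₁`
such that every club `E ⊆ E₁` admits `A ∈ F` with `A ⊆* set(E, E₁)`, then `𝔡(κ) ≤ 𝔯(κ)`. -/

theorem stmt8 (κ : Cardinal.{0}) (hreg : κ.IsRegular) (hunc : ℵ₀ < κ)
    (F : Set (Set Ordinal)) (hF : UnreapedFam κ F) (hFcard : #F = reapingNum κ)
    (E₁ : Set Ordinal) (hE₁ : IsClubIn E₁ κ.ord)
    (h : ∀ E, IsClubIn E κ.ord → E ⊆ E₁ → ∃ A ∈ F, SubsetStar κ A (setSet E E₁)) :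
    dominatingNum κ ≤ reapingNum κ := by
  have holim : Order.IsSuccLimit κ.ord := Cardinal.isSuccLimit_ord hreg.aleph0_le
  have hE₁u : Unbdd κ.ord E₁ := club_unbdd hE₁ holim
  set D := (fun A : Set Ordinal => fun α => succIn A (succIn E₁ α)) '' F with hD
  have hdom : DominatingFam κ D := by
    constructor
    · rintro f ⟨A, hAF, rfl⟩ α hα
      have hAu : Unbdd κ.ord A := big_unbdd κ hreg A (hF.1 A hAF).1 (hF.1 A hAF).2
      exact succIn_lt hAu (hF.1 A hAF).1 (succIn_lt hE₁u hE₁.1 hα)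
    · intro g hg
      have hEclub := closurePts_club κ hreg hunc E₁ hE₁ g hg
      obtain ⟨A, hAF, hsub⟩ := h (closurePts κ E₁ g) hEclub (fun ξ hξ => hξ.2.1)
      refine ⟨_, mem_image_of_mem _ hAF, ?_⟩
      have hAbig := hF.1 A hAF
      have hAu : Unbdd κ.ord A := big_unbdd κ hreg A hAbig.1 hAbig.2
      obtain ⟨β, hβ, hβ'⟩ := small_bdd κ hreg _ (fun s hs => hAbig.1 hs.1) hsub
      have hsubset : {α : Ordinal | α < κ.ord ∧
          (fun α => succIn A (succIn E₁ α)) α < g α} ⊆ Set.Iio β := by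
        intro α hα
        simp only [mem_setOf_eq] at hα
        rw [Set.mem_Iio]
        by_contra hαβ
        push_neg at hαβ
        have he : succIn E₁ α < κ.ord := succIn_lt hE₁u hE₁.1 hα.1
        have ha'A : succIn A (succIn E₁ α) ∈ A := (succIn_spec hAu he).1
        have hea' : succIn E₁ α < succIn A (succIn E₁ α) := (succIn_spec hAu he).2
        have ha'set : succIn A (succIn E₁ α) ∈ setSet (closurePts κ E₁ g) E₁ := by
          by_contra hcon
          have hlt := hβ' _ ⟨ha'A, hcon⟩
          exact absurd hlt (not_lt.2 (hαβ.trans ((succIn_spec hE₁u hα.1).2.trans hea').le))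
        simp only [setSet, blockSet, mem_iUnion, mem_setOf_eq] at ha'set
        obtain ⟨ξ, hξE, hξle, ha'lt⟩ := ha'set
        have hαξ : α < ξ := by
          by_contra hle
          push_neg at hle
          exact absurd ha'lt
            (not_lt.2 ((succIn_mono hE₁u hle hα.1).trans hea'.le))
        have hgξ : g α < ξ := hξE.2.2 α hαξ
        exact absurd hα.2 (not_lt.2 (hgξ.trans_le hξle).le)
      show #({α : Ordinal | α < κ.ord ∧ (fun α => succIn A (succIn E₁ α)) α < g α} :
        Set Ordinal) < Cardinal.lift.{1} κ
      calc #({α : Ordinal | α < κ.ord ∧ (fun α => succIn A (succIn E₁ α)) α < g α} :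
            Set Ordinal) ≤ #(Set.Iio β : Set Ordinal) := Cardinal.mk_le_mk_of_subset hsubset
        _ = Cardinal.lift.{1} β.card := Ordinal.mk_Iio_ordinal β
        _ < Cardinal.lift.{1} κ := Cardinal.lift_lt.2 (Cardinal.lt_ord.1 hβ)
  calc dominatingNum κ ≤ #D := csInf_le' ⟨D, hdom, rfl⟩
    _ ≤ #F := Cardinal.mk_image_le
    _ = reapingNum κ := hFcard
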